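/- Let X be a locally compact Hausdorff space and let k : X × X → [0,∞) be a continuous, symmetric, nonnegative (finite-valued) kernel. Then for every set H ⊆ X and every compact set K ⊆ X one has q(H,K) = q^#(H,K), i.e. inf_{μ∈M1(H)} sup_{x∈K} U^μ(x) = inf_{μ∈M1^#(H)} sup_{x∈K} U^μ(x). -/

import Mathlib

open MeasureTheory Set ENNReal Filter
open scoped NNReal

variable {X : Type*}

/-- The potential `U^μ(x) = ∫ k(x,y) dμ(y)` of a measure `μ` with respect to the kernel `k`. -/
noncomputable def potential [MeasurableSpace X] (k : X → X → ℝ≥0∞) (μ : Measure X) (x : X) :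
    ℝ≥0∞ :=
  ∫⁻ y, k x y ∂μ

/-- `M1 H` : the regular Borel probability measures concentrated on `H`
(i.e. with outer measure of `H` equal to `1`). -/
def M1 [TopologicalSpace X] [MeasurableSpace X] (H : Set X) : Set (Measure X) :=
  {μ | IsProbabilityMeasure μ ∧ μ.Regular ∧ μ H = 1}

/-- `M1sharp H` : finite convex combinations of Dirac measures at points of `H`. -/
def M1sharp [MeasurableSpace X] (H : Set X) : Set (Measure X) :=
  {μ | ∃ (n : ℕ) (w : Fin n → X) (α : Fin n → ℝ≥0∞),
    (∀ j, w j ∈ H) ∧ (∑ j, α j = 1) ∧ μ = ∑ j, α j • Measure.dirac (w j)}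

/-- The quasi-uniform energy `q(H,L)`. -/
noncomputable def qEnergy [TopologicalSpace X] [MeasurableSpace X] (k : X → X → ℝ≥0∞)
    (H L : Set X) : ℝ≥0∞ :=
  ⨅ μ ∈ M1 H, ⨆ x ∈ L, potential k μ x

/-- The restricted quasi-uniform energy `q^#(H,L)`. -/
noncomputable def qEnergySharp [MeasurableSpace X] (k : X → X → ℝ≥0∞) (H L : Set X) : ℝ≥0∞ :=
  ⨅ μ ∈ M1sharp H, ⨆ x ∈ L, potential k μ x

/-- The dual energy `q̲(H,L)`. -/
noncomputable def qEnergyLow [TopologicalSpace X] [MeasurableSpace X] (k : X → X → ℝ≥0∞)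
    (H L : Set X) : ℝ≥0∞ :=
  ⨆ μ ∈ M1 H, ⨅ x ∈ L, potential k μ x

/-- The restricted dual energy `q̲^#(H,L)`. -/
noncomputable def qEnergyLowSharp [MeasurableSpace X] (k : X → X → ℝ≥0∞) (H L : Set X) : ℝ≥0∞ :=
  ⨆ μ ∈ M1sharp H, ⨅ x ∈ L, potential k μ x

/-- The `n`-th Chebyshev constant `M_n(H,L)`. -/
noncomputable def chebM (k : X → X → ℝ≥0∞) (H L : Set X) (n : ℕ) : ℝ≥0∞ :=
  ⨆ (w : Fin n → X) (_ : ∀ j, w j ∈ H), ⨅ x ∈ L, (∑ j, k x (w j)) / (n : ℝ≥0∞)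

/-- The `n`-th dual Chebyshev constant `M̄_n(H,L)`. -/
noncomputable def chebMbar (k : X → X → ℝ≥0∞) (H L : Set X) (n : ℕ) : ℝ≥0∞ :=
  ⨅ (w : Fin n → X) (_ : ∀ j, w j ∈ H), ⨆ x ∈ L, (∑ j, k x (w j)) / (n : ℝ≥0∞)

/-- The `n`-th diameter `D_n(H)`. -/
noncomputable def diamN (k : X → X → ℝ≥0∞) (H : Set X) (n : ℕ) : ℝ≥0∞ :=
  ⨅ (w : Fin n → X) (_ : ∀ j, w j ∈ H),
    (2 * ∑ p ∈ Finset.univ.filter (fun p : Fin n × Fin n => p.1 < p.2), k (w p.1) (w p.2)) /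
      ((n : ℝ≥0∞) * ((n : ℝ≥0∞) - 1))

/-- The `n`-th rendezvous set `R_n(H,L)`. -/
noncomputable def rendezvousN (k : X → X → ℝ≥0∞) (H L : Set X) (n : ℕ) : Set ℝ≥0∞ :=
  ⋂ (w : Fin n → X) (_ : ∀ j, w j ∈ H),
    Icc (⨅ x ∈ L, (∑ j, k x (w j)) / (n : ℝ≥0∞)) (⨆ x ∈ L, (∑ j, k x (w j)) / (n : ℝ≥0∞))

/-- The rendezvous set `R(H,L) = ⋂_{n ≥ 1} R_n(H,L)`. -/
noncomputable def rendezvous (k : X → X → ℝ≥0∞) (H L : Set X) : Set ℝ≥0∞ :=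
  ⋂ n : ℕ, rendezvousN k H L (n + 1)

/-- The average set `A(H,L)`. -/
noncomputable def averageSet [TopologicalSpace X] [MeasurableSpace X] (k : X → X → ℝ≥0∞)
    (H L : Set X) : Set ℝ≥0∞ :=
  ⋂ μ ∈ M1 H, Icc (⨅ x ∈ L, potential k μ x) (⨆ x ∈ L, potential k μ x)

open scoped Classical in
lemma discrete_apply [MeasurableSpace X] [MeasurableSingletonClass X]
    {n : ℕ} (w : Fin n → X) (α : Fin n → ℝ≥0∞) (s : Set X) :
    (∑ j, α j • Measure.dirac (w j)) s
      = ∑ j ∈ Finset.univ.filter (fun j => w j ∈ s), α j := by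
  rw [Measure.finset_sum_apply, Finset.sum_filter]
  refine Finset.sum_congr rfl fun j _ => ?_
  rw [Measure.smul_apply, Measure.dirac_apply, smul_eq_mul]
  by_cases h : w j ∈ s <;> simp [indicator, h]

open scoped Classical in
lemma mem_M1_of_mem_M1sharp' [TopologicalSpace X] [T2Space X] [MeasurableSpace X] [BorelSpace X]
    {H : Set X} {n : ℕ} {w : Fin n → X} {α : Fin n → ℝ≥0∞}
    (hw : ∀ j, w j ∈ H) (hα : ∑ j, α j = 1) :
    IsProbabilityMeasure (∑ j, α j • Measure.dirac (w j)) ∧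
      (∑ j, α j • Measure.dirac (w j)).Regular ∧ (∑ j, α j • Measure.dirac (w j)) H = 1 := by
  have happ := discrete_apply w α
  have hprob : IsProbabilityMeasure (∑ j, α j • Measure.dirac (w j)) := by
    constructor
    rw [happ]
    simpa using hα
  haveI := hprob
  have hout : ∀ ⦃A : Set X⦄, MeasurableSet A → ∀ r > (∑ j, α j • Measure.dirac (w j)) A,
      ∃ U ⊇ A, IsOpen U ∧ (∑ j, α j • Measure.dirac (w j)) U < r := by
    intro A _ r hr
    refine ⟨(↑((Finset.univ.filter (fun j => w j ∉ A)).image w) : Set X)ᶜ, ?_, ?_, ?_⟩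
    · intro z hz hzm
      simp only [Finset.coe_image, mem_image] at hzm
      obtain ⟨j, hj, rfl⟩ := hzm
      exact (Finset.mem_filter.mp hj).2 hz
    · exact (Finset.finite_toSet _).isClosed.isOpen_compl
    · refine lt_of_le_of_lt ?_ hr
      rw [happ, happ]
      refine Finset.sum_le_sum_of_subset fun j hj => ?_
      simp only [Finset.mem_filter, Finset.mem_univ, true_and] at hj ⊢
      by_contra hjA
      exact hj (by
        simp only [mem_compl_iff, Finset.coe_image, mem_image, not_not] at hj ⊢
        exact ⟨j, Finset.mem_filter.mpr ⟨Finset.mem_univ _, hjA⟩, rfl⟩)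
  have hin : Measure.InnerRegularWRT (∑ j, α j • Measure.dirac (w j)) IsCompact IsOpen := by
    intro U _ r hr
    refine ⟨(↑((Finset.univ.filter (fun j => w j ∈ U)).image w) : Set X), ?_, ?_, ?_⟩
    · intro z hz
      simp only [Finset.coe_image, mem_image] at hz
      obtain ⟨j, hj, rfl⟩ := hz
      exact (Finset.mem_filter.mp hj).2
    · exact (Finset.finite_toSet _).isCompact
    · refine lt_of_lt_of_le hr ?_
      rw [happ, happ]
      refine Finset.sum_le_sum_of_subset fun j hj => ?_
      simp only [Finset.mem_filter, Finset.mem_univ, true_and] at hj ⊢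
      simp only [Finset.coe_image, mem_image]
      exact ⟨j, Finset.mem_filter.mpr ⟨Finset.mem_univ _, hj⟩, rfl⟩
  refine ⟨hprob, { outerRegular := hout, innerRegular := hin }, ?_⟩
  rw [happ, Finset.filter_true_of_mem fun j _ => hw j]
  exact hα

lemma nbhd_exists [TopologicalSpace X] (k : X → X → NNReal)
    (hk : Continuous fun p : X × X => k p.1 p.2) {K : Set X} (hK : IsCompact K)
    {η : ℝ≥0} (hη : 0 < η) (y : X) :
    ∃ v : Set X, IsOpen v ∧ y ∈ v ∧ ∀ x ∈ K, ∀ z ∈ v, |(k x z : ℝ) - (k x y : ℝ)| < η := by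
  have hf : Continuous fun p : X × X => |(k p.1 p.2 : ℝ) - (k p.1 y : ℝ)| := by
    apply Continuous.abs
    exact (NNReal.continuous_coe.comp hk).sub
      (NNReal.continuous_coe.comp (hk.comp (continuous_fst.prodMk continuous_const)))
  have hN : IsOpen {p : X × X | |(k p.1 p.2 : ℝ) - (k p.1 y : ℝ)| < (η : ℝ)} :=
    isOpen_lt hf continuous_const
  have hKN : K ×ˢ ({y} : Set X) ⊆ {p : X × X | |(k p.1 p.2 : ℝ) - (k p.1 y : ℝ)| < (η : ℝ)} := by
    rintro ⟨x, y'⟩ ⟨-, hy'⟩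
    rcases hy' with rfl
    simpa using hη
  obtain ⟨u, v, hu, hv, hKu, hyv, huv⟩ :=
    generalized_tube_lemma hK isCompact_singleton hN hKN
  exact ⟨v, hv, hyv rfl, fun x hx z hz => huv (Set.mk_mem_prod (hKu hx) hz)⟩

/-- For a continuous, symmetric, finite-valued kernel and compact `K`,
`q(H,K) = q^#(H,K)` for every `H ⊆ X`. -/
theorem qEnergy_eq_qEnergySharp_of_continuous
    {X : Type*} [TopologicalSpace X] [LocallyCompactSpace X] [T2Space X]
    [MeasurableSpace X] [BorelSpace X]
    (k : X → X → NNReal)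
    (hk : Continuous fun p : X × X => k p.1 p.2)
    (hksymm : ∀ x y, k x y = k y x)
    (H K : Set X) (hK : IsCompact K) :
    qEnergy (fun x y => (k x y : ℝ≥0∞)) H K = qEnergySharp (fun x y => (k x y : ℝ≥0∞)) H K := by
  classical
  unfold qEnergy qEnergySharp
  refine le_antisymm ?_ ?_
  · -- easy: M1sharp ⊆ M1
    refine le_iInf₂ fun ν hν => ?_
    obtain ⟨n, w, α, hw, hα, rfl⟩ := hν
    have hmem := mem_M1_of_mem_M1sharp' hw hα
    exact iInf₂_le (∑ j, α j • Measure.dirac (w j))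
      (⟨hmem.1, hmem.2.1, hmem.2.2⟩ : (∑ j, α j • Measure.dirac (w j)) ∈ M1 H)
  · -- hard direction
    refine le_iInf₂ fun μ hμ => ?_
    obtain ⟨hprob, hreg, hH⟩ := hμ
    haveI := hprob
    refine ENNReal.le_of_forall_pos_le_add fun ε hε _ => ?_
    set η : ℝ≥0 := ε / 3 with hηdef
    have hηpos : 0 < η := by positivity
    -- H is nonempty
    have hHne : H.Nonempty := by
      rcases H.eq_empty_or_nonempty with h | h
      · rw [h] at hH; simp at hH
      · exact h
    obtain ⟨w0, hw0⟩ := hHne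
    -- bound for k · w0 on K
    obtain ⟨M, hM⟩ := (hK.image
      (show Continuous fun x => k x w0 from
        hk.comp (continuous_id.prodMk continuous_const))).bddAbove
    rw [mem_upperBounds] at hM
    have hMK : ∀ x ∈ K, k x w0 ≤ M := fun x hx => hM _ (mem_image_of_mem _ hx)
    set δ : ℝ≥0 := η / (M + 1) with hδdef
    have hδpos : 0 < δ := by positivity
    have hδM : δ * M ≤ η := by
      calc δ * M ≤ δ * (M + 1) := by gcongr; exact le_self_add
        _ = η := by rw [hδdef, div_mul_cancel₀]; positivity
    -- compact C with μ C > 1 - δ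
    obtain ⟨C, -, hCcomp, hCμ⟩ := hreg.innerRegular isOpen_univ ((1 : ℝ≥0∞) - δ)
      (by rw [measure_univ]
          exact ENNReal.sub_lt_self one_ne_top one_ne_zero (by exact_mod_cast hδpos.ne'))
    -- the neighborhoods
    choose V hVopen hVmem hVosc using fun y => nbhd_exists k hk hK hηpos y
    obtain ⟨t, ht⟩ := hCcomp.elim_finite_subcover V hVopen
      (fun z _ => mem_iUnion.mpr ⟨z, hVmem z⟩)
    set m := t.card with hm
    set g : Fin m → X := fun i => ((t.equivFin.symm i : t) : X) with hg
    have hgsurj : ∀ y ∈ t, ∃ i : Fin m, g i = y := fun y hy =>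
      ⟨t.equivFin ⟨y, hy⟩, by simp [hg]⟩
    -- disjointified pieces
    set E : Fin m → Set X := fun i =>
      (C ∩ V (g i)) \ ⋃ j : Fin m, ⋃ (_ : j < i), V (g j) with hE
    have hEmeas : ∀ i, MeasurableSet (E i) := fun i =>
      ((hCcomp.isClosed.measurableSet.inter (hVopen _).measurableSet).diff
        (MeasurableSet.iUnion fun j => MeasurableSet.iUnion fun _ =>
          (hVopen _).measurableSet))
    have hEsubV : ∀ i, E i ⊆ V (g i) := fun i z hz => hz.1.2
    have hEdisj : Pairwise (Function.onFun Disjoint E) := by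
      have key : ∀ i j : Fin m, i < j → Disjoint (E i) (E j) := by
        intro i j hij
        refine Set.disjoint_left.mpr fun z hzi hzj => ?_
        exact hzj.2 (mem_iUnion.mpr ⟨i, mem_iUnion.mpr ⟨hij, hzi.1.2⟩⟩)
      intro i j hij
      rcases lt_or_gt_of_ne hij with h | h
      · exact key i j h
      · exact (key j i h).symm
    have hCE : C ⊆ ⋃ i, E i := by
      intro z hz
      have hex : ∃ i : Fin m, z ∈ V (g i) := by
        obtain ⟨y, hyt, hyz⟩ := mem_iUnion₂.mp (ht hz)
        obtain ⟨i, rfl⟩ := hgsurj y hyt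
        exact ⟨i, hyz⟩
      set s := Finset.univ.filter (fun i : Fin m => z ∈ V (g i)) with hs
      have hsne : s.Nonempty := ⟨hex.choose, by simp [hs, hex.choose_spec]⟩
      refine mem_iUnion.mpr ⟨s.min' hsne, ⟨⟨hz, ?_⟩, ?_⟩⟩
      · have := s.min'_mem hsne
        simp only [hs, Finset.mem_filter] at this
        exact this.2
      · intro hmem
        obtain ⟨j, hj⟩ := mem_iUnion.mp hmem
        obtain ⟨hji, hzj⟩ := mem_iUnion.mp hj
        exact absurd (s.min'_le j (by simp [hs, hzj])) (not_le.mpr hji)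
    -- total mass of pieces
    set U : Set X := ⋃ i, E i with hUdef
    have hUmeas : MeasurableSet U := MeasurableSet.iUnion hEmeas
    have hUμ : μ U = ∑ i, μ (E i) := by
      rw [hUdef, measure_iUnion hEdisj hEmeas, tsum_fintype]
    have hU1 : μ U ≤ 1 := prob_le_one
    set r : ℝ≥0∞ := 1 - μ U with hr
    have hrδ : r ≤ (δ : ℝ≥0∞) := by
      rw [hr, tsub_le_iff_right]
      calc (1 : ℝ≥0∞) ≤ (1 - δ) + δ := le_tsub_add
        _ ≤ μ U + δ := by gcongr; exact le_trans hCμ.le (measure_mono hCE)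
        _ = δ + μ U := add_comm _ _
    -- chosen points
    set w' : Fin m → X := fun i => if h : (E i ∩ H).Nonempty then h.choose else w0 with hw'
    have hw'H : ∀ i, w' i ∈ H := by
      intro i
      by_cases h : (E i ∩ H).Nonempty
      · simp only [hw', dif_pos h]; exact h.choose_spec.2
      · simp only [hw', dif_neg h]; exact hw0
    have hw'E : ∀ i, μ (E i) ≠ 0 → w' i ∈ E i := by
      intro i hi
      have hne : (E i ∩ H).Nonempty := by
        by_contra hemp
        have hsub : H ⊆ (E i)ᶜ := fun z hz hzE => hemp ⟨z, hzE, hz⟩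
        have h1 : (1 : ℝ≥0∞) ≤ μ (E i)ᶜ := hH ▸ measure_mono hsub
        have h2 : μ (E i)ᶜ = 1 - μ (E i) := by
          rw [measure_compl (hEmeas i) (measure_ne_top μ _), measure_univ]
        rw [h2] at h1
        exact absurd h1 (not_le.mpr (ENNReal.sub_lt_self one_ne_top one_ne_zero hi))
      simp only [hw', dif_pos hne]
      exact hne.choose_spec.1
    -- the discrete measure
    set w : Fin (m + 1) → X := Fin.snoc w' w0 with hwdef
    set α : Fin (m + 1) → ℝ≥0∞ := Fin.snoc (fun i => μ (E i)) r with hαdef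
    have hwH : ∀ j, w j ∈ H := by
      intro j
      refine Fin.lastCases ?_ ?_ j
      · simp only [hwdef, Fin.snoc_last]; exact hw0
      · intro i; simp only [hwdef, Fin.snoc_castSucc]; exact hw'H i
    have hαsum : ∑ j, α j = 1 := by
      rw [Fin.sum_univ_castSucc]
      simp only [hαdef, Fin.snoc_castSucc, Fin.snoc_last]
      rw [← hUμ, hr, add_tsub_cancel_of_le hU1]
    have hνmem : (∑ j, α j • Measure.dirac (w j)) ∈ M1sharp H :=
      ⟨m + 1, w, α, hwH, hαsum, rfl⟩
    refine le_trans (iInf₂_le _ hνmem) ?_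
    refine iSup₂_le fun x hx => ?_
    -- compute the potential of the discrete measure
    have hpot : potential (fun x y => (k x y : ℝ≥0∞)) (∑ j, α j • Measure.dirac (w j)) x
        = ∑ j, α j * (k x (w j) : ℝ≥0∞) := by
      rw [potential, lintegral_finset_sum_measure]
      refine Finset.sum_congr rfl fun j _ => ?_
      rw [lintegral_smul_measure, lintegral_dirac, smul_eq_mul]
    rw [hpot, Fin.sum_univ_castSucc]
    have hlast : α (Fin.last m) * (k x (w (Fin.last m)) : ℝ≥0∞) ≤ (η : ℝ≥0∞) := by
      simp only [hαdef, hwdef, Fin.snoc_last]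
      calc r * (k x w0 : ℝ≥0∞) ≤ (δ : ℝ≥0∞) * (M : ℝ≥0∞) := by
            gcongr
            exact_mod_cast hMK x hx
        _ = ((δ * M : ℝ≥0) : ℝ≥0∞) := by rw [ENNReal.coe_mul]
        _ ≤ (η : ℝ≥0∞) := by exact_mod_cast hδM
    have hmain : ∀ i : Fin m,
        α (Fin.castSucc i) * (k x (w (Fin.castSucc i)) : ℝ≥0∞)
          ≤ (∫⁻ y in E i, (k x y : ℝ≥0∞) ∂μ) + 2 * (η : ℝ≥0∞) * μ (E i) := by
      intro i
      simp only [hαdef, hwdef, Fin.snoc_castSucc]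
      by_cases hi : μ (E i) = 0
      · simp [hi]
      · have hwE := hw'E i hi
        have hb : ∀ y ∈ E i, (k x (w' i) : ℝ≥0∞) ≤ (k x y : ℝ≥0∞) + 2 * (η : ℝ≥0∞) := by
          intro y hy
          have h1 := hVosc (g i) x hx (w' i) (hEsubV i hwE)
          have h2 := hVosc (g i) x hx y (hEsubV i hy)
          have hreal : (k x (w' i) : ℝ) ≤ (k x y : ℝ) + 2 * (η : ℝ) := by
            have := abs_lt.mp h1
            have := abs_lt.mp h2
            linarith [(abs_lt.mp h1).2, (abs_lt.mp h2).1]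
          have hnn : k x (w' i) ≤ k x y + 2 * η := by
            rw [← NNReal.coe_le_coe]
            push_cast
            linarith
          calc (k x (w' i) : ℝ≥0∞) ≤ ((k x y + 2 * η : ℝ≥0) : ℝ≥0∞) := by exact_mod_cast hnn
            _ = (k x y : ℝ≥0∞) + 2 * (η : ℝ≥0∞) := by push_cast; ring
        calc μ (E i) * (k x (w' i) : ℝ≥0∞)
            = ∫⁻ _ in E i, (k x (w' i) : ℝ≥0∞) ∂μ := by
              rw [setLIntegral_const, mul_comm]
          _ ≤ ∫⁻ y in E i, ((k x y : ℝ≥0∞) + 2 * (η : ℝ≥0∞)) ∂μ :=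
              setLIntegral_mono (by
                exact ((ENNReal.continuous_coe.comp
                  (hk.comp (continuous_const.prodMk continuous_id))).measurable.add
                  measurable_const)) hb
          _ = (∫⁻ y in E i, (k x y : ℝ≥0∞) ∂μ) + 2 * (η : ℝ≥0∞) * μ (E i) := by
              rw [lintegral_add_right _ measurable_const, setLIntegral_const]
    calc (∑ i : Fin m, α (Fin.castSucc i) * (k x (w (Fin.castSucc i)) : ℝ≥0∞))
          + α (Fin.last m) * (k x (w (Fin.last m)) : ℝ≥0∞)
        ≤ (∑ i : Fin m, ((∫⁻ y in E i, (k x y : ℝ≥0∞) ∂μ) + 2 * (η : ℝ≥0∞) * μ (E i)))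
          + (η : ℝ≥0∞) := add_le_add (Finset.sum_le_sum fun i _ => hmain i) hlast
      _ = ((∫⁻ y in U, (k x y : ℝ≥0∞) ∂μ) + 2 * (η : ℝ≥0∞) * μ U) + (η : ℝ≥0∞) := by
          rw [Finset.sum_add_distrib, hUdef, lintegral_iUnion hEmeas hEdisj, tsum_fintype,
            measure_iUnion hEdisj hEmeas, tsum_fintype, Finset.mul_sum]
      _ ≤ (potential (fun x y => (k x y : ℝ≥0∞)) μ x + 2 * (η : ℝ≥0∞) * 1) + (η : ℝ≥0∞) := by
          gcongr
          · exact setLIntegral_le_lintegral _ _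
      _ = potential (fun x y => (k x y : ℝ≥0∞)) μ x + ((2 * η + η : ℝ≥0) : ℝ≥0∞) := by
          push_cast; ring
      _ ≤ (⨆ x ∈ K, potential (fun x y => (k x y : ℝ≥0∞)) μ x) + (ε : ℝ≥0∞) := by
          gcongr
          · exact le_biSup _ hx
          · exact_mod_cast (by rw [hηdef]; rw [← NNReal.coe_le_coe]; push_cast; linarith [NNReal.coe_pos.mpr hε] : 2 * η + η ≤ ε)
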